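/- Let c(n,m) be the number of increasing 1,2-trees on {1,…,n} with m edges, and let C be the formal power series in the variable z, with coefficients in the ring ℚ[[u]] of formal power series in u, whose coefficient of z^n is (1/n!)·Σ_m c(n,m)·u^m (a polynomial in u, since c(n,m) = 0 for m > 2n−3). Then the constant term of C (its coefficient of z^0) is 0, and C satisfies the partial differential equation dC/dz = 1 + z·u·(dC/dz) + u³·C_u, where dC/dz denotes the formal derivative of C with respect to z, C_u denotes the series obtained from C by differentiating each z-coefficient with respect to u, 1 denotes the constant series, and u denotes the series with constant z-coefficient u. -/

import Mathlib

open SimpleGraph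

/-- The set of neighbors of `v` having a smaller label. -/
def lowerNbrs {n : ℕ} (G : SimpleGraph (Fin n)) (v : Fin n) : Set (Fin n) :=
  {x | G.Adj v x ∧ x < v}

/-- `G` is an increasing 1,2-tree: every vertex other than the first one has a nonempty
set of smaller neighbors, of cardinality at most 2, forming a clique. -/
def IsIncreasing12Tree {n : ℕ} (G : SimpleGraph (Fin n)) : Prop :=
  ∀ v : Fin n, 1 ≤ v.val →
    (lowerNbrs G v).Nonempty ∧ (lowerNbrs G v).ncard ≤ 2 ∧
      ∀ x ∈ lowerNbrs G v, ∀ y ∈ lowerNbrs G v, x ≠ y → G.Adj x y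

/-- The set of vertices reachable from `v` after deleting the edge `{u,v}`
(in a tree, the vertex set of the subtree rooted at `v` when `v` is the child endpoint). -/
def subtreeSet {n : ℕ} (G : SimpleGraph (Fin n)) (u v : Fin n) : Set (Fin n) :=
  {w | (G.deleteEdges {s(u, v)}).Reachable v w}

/-- `v` is the child endpoint of the edge `{u,v}`: after deleting this edge,
`v` is no longer reachable from the root. -/
def IsChild {n : ℕ} (G : SimpleGraph (Fin n)) (root u v : Fin n) : Prop :=
  G.Adj u v ∧ ¬ (G.deleteEdges {s(u, v)}).Reachable root v

/-- The minimal label occurring in a set of vertices (labels being `Fin.val`). -/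
noncomputable def minLabel {n : ℕ} (S : Set (Fin n)) : ℕ := sInf (Fin.val '' S)

/-- An edge `{u,v}` with child endpoint `v` is a twist if the minimal label in the
subtree rooted at `v` is smaller than the label of `u`. -/
def IsTwist {n : ℕ} (G : SimpleGraph (Fin n)) (root : Fin n) (e : Sym2 (Fin n)) : Prop :=
  ∃ u v : Fin n, e = s(u, v) ∧ IsChild G root u v ∧ minLabel (subtreeSet G u v) < u.val

/-- An edge `{u,v}` with child endpoint `v` is increasing if the label of `u` is smaller
than every label in the subtree rooted at `v`. -/
def IsIncreasingEdge {n : ℕ} (G : SimpleGraph (Fin n)) (root : Fin n) (e : Sym2 (Fin n)) : Prop :=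
  ∃ u v : Fin n, e = s(u, v) ∧ IsChild G root u v ∧ u.val < minLabel (subtreeSet G u v)

/-- The number of twists of `G` (with respect to the given root). -/
noncomputable def numTwists {n : ℕ} (G : SimpleGraph (Fin n)) (root : Fin n) : ℕ :=
  Nat.card {e : Sym2 (Fin n) // e ∈ G.edgeSet ∧ IsTwist G root e}

/-- The number of increasing 1,2-trees on `n` vertices with `m` edges. -/
noncomputable def numInc12Trees (n m : ℕ) : ℕ :=
  Nat.card {G : SimpleGraph (Fin n) // IsIncreasing12Tree G ∧ G.edgeSet.ncard = m}

/-- The number of Cayley trees on `n ≥ 1` vertices (rooted at the vertex with label 1)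
with exactly `j` twists. -/
noncomputable def numCayleyTwist (n j : ℕ) (h : 0 < n) : ℕ :=
  Nat.card {G : SimpleGraph (Fin n) // G.IsTree ∧ numTwists G ⟨0, h⟩ = j}

open PowerSeries

/-- Formal derivative of a power series (with respect to its own variable). -/
noncomputable def derivSeries {R : Type*} [CommSemiring R] (f : PowerSeries R) :
    PowerSeries R :=
  PowerSeries.mk fun k => ((k + 1 : ℕ) : R) * PowerSeries.coeff (R := R) (k + 1) f

/-- Derivative of a series in `z` with coefficients in `ℚ[[u]]`, with respect to `u`
(i.e. coefficientwise in `z`). -/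
noncomputable def derivU (f : PowerSeries (PowerSeries ℚ)) : PowerSeries (PowerSeries ℚ) :=
  PowerSeries.mk fun k => derivSeries (PowerSeries.coeff (R := PowerSeries ℚ) k f)

namespace Scratch
variable {n : ℕ}

/-- restriction to the first n vertices -/
def res (G : SimpleGraph (Fin (n+1))) : SimpleGraph (Fin n) := G.comap Fin.castSucc

/-- extension of a graph on `Fin n` by a new maximal vertex attached to `D`. -/
def extS (G : SimpleGraph (Fin n)) (D : Set (Fin n)) : SimpleGraph (Fin (n+1)) where
  Adj a b := (∃ a' b' : Fin n, a = a'.castSucc ∧ b = b'.castSucc ∧ G.Adj a' b')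
    ∨ (a = Fin.last n ∧ ∃ w ∈ D, b = w.castSucc)
    ∨ (b = Fin.last n ∧ ∃ w ∈ D, a = w.castSucc)
  symm := by
    constructor
    rintro a b (⟨a', b', rfl, rfl, h⟩ | h | h)
    · exact Or.inl ⟨b', a', rfl, rfl, h.symm⟩
    · exact Or.inr (Or.inr h)
    · exact Or.inr (Or.inl h)
  loopless := by
    constructor
    rintro a (⟨a', b', rfl, h1, h2⟩ | ⟨rfl, w, hw, h⟩ | ⟨rfl, w, hw, h⟩)
    · rw [Fin.castSucc_inj] at h1; subst h1; exact h2.ne rfl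
    · exact absurd h.symm ((Fin.castSucc_lt_last w).ne)
    · exact absurd h.symm ((Fin.castSucc_lt_last w).ne)

lemma res_extS (G : SimpleGraph (Fin n)) (D : Set (Fin n)) : res (extS G D) = G := by
  ext a b
  constructor
  · rintro (⟨a', b', h1, h2, h⟩ | ⟨h, -⟩ | ⟨h, -⟩)
    · rw [Fin.castSucc_inj] at h1 h2; subst h1; subst h2; exact h
    · exact absurd h (Fin.castSucc_lt_last a).ne
    · exact absurd h (Fin.castSucc_lt_last b).ne
  · intro h; exact Or.inl ⟨a, b, rfl, rfl, h⟩

lemma adj_last_extS (G : SimpleGraph (Fin n)) (D : Set (Fin n)) (b : Fin (n+1)) :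
    (extS G D).Adj (Fin.last n) b ↔ ∃ w ∈ D, b = w.castSucc := by
  constructor
  · rintro (⟨a', b', h1, h2, h⟩ | ⟨-, w, hw, h⟩ | ⟨-, w, hw, h⟩)
    · exact absurd h1.symm (Fin.castSucc_lt_last a').ne
    · exact ⟨w, hw, h⟩
    · exact absurd h.symm (Fin.castSucc_lt_last w).ne
  · rintro ⟨w, hw, rfl⟩; exact Or.inr (Or.inl ⟨rfl, w, hw, rfl⟩)

end Scratch

namespace Scratch
variable {n : ℕ}

/-- the lower-neighbor set of the last vertex, as a subset of `Fin n` -/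
def lastNbrs (G : SimpleGraph (Fin (n+1))) : Set (Fin n) :=
  {w : Fin n | G.Adj (Fin.last n) w.castSucc}

lemma lowerNbrs_last (G : SimpleGraph (Fin (n+1))) :
    lowerNbrs G (Fin.last n) = G.neighborSet (Fin.last n) := by
  ext x
  simp only [lowerNbrs, Set.mem_setOf_eq, neighborSet, and_iff_left_iff_imp]
  intro h
  exact Fin.lt_last_iff_ne_last.2 (fun hx => h.ne' (hx ▸ rfl))

lemma neighborSet_last (G : SimpleGraph (Fin (n+1))) :
    G.neighborSet (Fin.last n) = Fin.castSucc '' lastNbrs G := by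
  ext x
  simp only [neighborSet, Set.mem_setOf_eq, lastNbrs, Set.mem_image]
  constructor
  · intro h
    obtain ⟨y, rfl⟩ := Fin.exists_castSucc_eq.2 (fun hx => h.ne' (hx ▸ rfl))
    exact ⟨y, h, rfl⟩
  · rintro ⟨y, hy, rfl⟩; exact hy

lemma lastNbrs_extS (G : SimpleGraph (Fin n)) (D : Set (Fin n)) :
    lastNbrs (extS G D) = D := by
  ext w
  simp only [lastNbrs, Set.mem_setOf_eq, adj_last_extS]
  constructor
  · rintro ⟨w', hw', h⟩; rwa [Fin.castSucc_inj.1 h]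
  · intro hw; exact ⟨w, hw, rfl⟩

lemma extS_res (G : SimpleGraph (Fin (n+1))) : extS (res G) (lastNbrs G) = G := by
  ext a b
  constructor
  · rintro (⟨a', b', rfl, rfl, h⟩ | ⟨rfl, w, hw, rfl⟩ | ⟨rfl, w, hw, rfl⟩)
    · exact h
    · exact hw
    · exact hw.symm
  · intro h
    by_cases ha : a = Fin.last n
    · subst ha
      obtain ⟨b', rfl⟩ := Fin.exists_castSucc_eq.2 (fun hb => h.ne' (hb ▸ rfl))
      exact Or.inr (Or.inl ⟨rfl, b', h, rfl⟩)
    · by_cases hb : b = Fin.last n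
      · subst hb
        obtain ⟨a', rfl⟩ := Fin.exists_castSucc_eq.2 ha
        exact Or.inr (Or.inr ⟨rfl, a', h.symm, rfl⟩)
      · obtain ⟨a', rfl⟩ := Fin.exists_castSucc_eq.2 ha
        obtain ⟨b', rfl⟩ := Fin.exists_castSucc_eq.2 hb
        exact Or.inl ⟨a', b', rfl, rfl, h⟩

lemma lowerNbrs_castSucc (G : SimpleGraph (Fin (n+1))) (v : Fin n) :
    lowerNbrs G v.castSucc = Fin.castSucc '' lowerNbrs (res G) v := by
  ext x
  simp only [lowerNbrs, Set.mem_setOf_eq, Set.mem_image]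
  constructor
  · rintro ⟨h1, h2⟩
    obtain ⟨y, rfl⟩ := Fin.exists_castSucc_eq.2 (Fin.ne_last_of_lt (h2.trans (Fin.castSucc_lt_last v)))
    exact ⟨y, ⟨h1, by simpa using h2⟩, rfl⟩
  · rintro ⟨y, ⟨h1, h2⟩, rfl⟩
    exact ⟨h1, by simpa using h2⟩

end Scratch

namespace Scratch
variable {n : ℕ}

lemma edgeSet_decomp (G : SimpleGraph (Fin (n+1))) :
    G.edgeSet = Sym2.map Fin.castSucc '' (res G).edgeSet
      ∪ (fun w => s(Fin.last n, w.castSucc)) '' lastNbrs G := by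
  ext e
  induction e using Sym2.ind with
  | _ a b =>
  simp only [SimpleGraph.mem_edgeSet, Set.mem_union, Set.mem_image]
  constructor
  · intro h
    by_cases ha : a = Fin.last n
    · subst ha
      obtain ⟨b', rfl⟩ := Fin.exists_castSucc_eq.2 (fun hb => h.ne' (hb ▸ rfl))
      exact Or.inr ⟨b', h, rfl⟩
    · by_cases hb : b = Fin.last n
      · subst hb
        obtain ⟨a', rfl⟩ := Fin.exists_castSucc_eq.2 ha
        exact Or.inr ⟨a', h.symm, by rw [Sym2.eq_swap]⟩
      · obtain ⟨a', rfl⟩ := Fin.exists_castSucc_eq.2 ha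
        obtain ⟨b', rfl⟩ := Fin.exists_castSucc_eq.2 hb
        exact Or.inl ⟨s(a', b'), h, rfl⟩
  · rintro (⟨e', he', he⟩ | ⟨w, hw, he⟩)
    · induction e' using Sym2.ind with
      | _ x y =>
        rw [Sym2.map_pair_eq] at he
        rw [Sym2.eq_iff] at he
        rcases he with ⟨rfl, rfl⟩ | ⟨rfl, rfl⟩
        · exact he'
        · exact he'.symm
    · rw [Sym2.eq_iff] at he
      rcases he with ⟨rfl, rfl⟩ | ⟨rfl, rfl⟩
      · exact hw
      · exact hw.symm

lemma ncard_edgeSet (G : SimpleGraph (Fin (n+1))) :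
    G.edgeSet.ncard = (res G).edgeSet.ncard + (lastNbrs G).ncard := by
  rw [edgeSet_decomp G, Set.ncard_union_eq, Set.ncard_image_of_injective _ (Sym2.map.injective (Fin.castSucc_injective n)),
    Set.ncard_image_of_injective]
  · intro x y h
    simp only [Sym2.eq_iff] at h
    rcases h with ⟨-, h⟩ | ⟨h, -⟩
    · exact Fin.castSucc_inj.1 h
    · exact absurd h (Fin.castSucc_lt_last y).ne'
  · rw [Set.disjoint_left]
    rintro e ⟨e', -, rfl⟩ ⟨w, -, hw⟩
    induction e' using Sym2.ind with
    | _ x y =>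
      rw [Sym2.map_pair_eq, Sym2.eq_iff] at hw
      rcases hw with ⟨h, -⟩ | ⟨h, -⟩
      · exact (Fin.castSucc_lt_last x).ne h.symm
      · exact (Fin.castSucc_lt_last y).ne h.symm

end Scratch

namespace Scratch
variable {n : ℕ}

lemma lowerNbrs_last_eq (G : SimpleGraph (Fin (n+1))) :
    lowerNbrs G (Fin.last n) = Fin.castSucc '' lastNbrs G := by
  rw [lowerNbrs_last, neighborSet_last]

lemma inc_res {G : SimpleGraph (Fin (n+1))} (hG : IsIncreasing12Tree G) :
    IsIncreasing12Tree (res G) := by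
  intro v hv
  obtain ⟨h1, h2, h3⟩ := hG v.castSucc (by simpa using hv)
  rw [lowerNbrs_castSucc] at h1 h2 h3
  refine ⟨?_, ?_, ?_⟩
  · exact (Set.image_nonempty (f := Fin.castSucc)).1 h1
  · rwa [Set.ncard_image_of_injective _ (Fin.castSucc_injective n)] at h2
  · intro x hx y hy hxy
    exact h3 _ (Set.mem_image_of_mem _ hx) _ (Set.mem_image_of_mem _ hy)
      (by simpa [Fin.castSucc_inj] using hxy)

lemma inc_extS {G : SimpleGraph (Fin n)} (hG : IsIncreasing12Tree G) {D : Set (Fin n)}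
    (hne : D.Nonempty) (hcard : D.ncard ≤ 2)
    (hclique : ∀ x ∈ D, ∀ y ∈ D, x ≠ y → G.Adj x y) :
    IsIncreasing12Tree (extS G D) := by
  intro v hv
  by_cases hvl : v = Fin.last n
  · subst hvl
    rw [lowerNbrs_last_eq, lastNbrs_extS]
    refine ⟨hne.image _, ?_, ?_⟩
    · rwa [Set.ncard_image_of_injective _ (Fin.castSucc_injective n)]
    · rintro x ⟨x', hx', rfl⟩ y ⟨y', hy', rfl⟩ hxy
      exact Or.inl ⟨x', y', rfl, rfl, hclique _ hx' _ hy'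
        (by simpa [Fin.castSucc_inj] using hxy)⟩
  · obtain ⟨v', rfl⟩ := Fin.exists_castSucc_eq.2 hvl
    rw [lowerNbrs_castSucc, res_extS]
    obtain ⟨h1, h2, h3⟩ := hG v' (by simpa using hv)
    refine ⟨h1.image _, ?_, ?_⟩
    · rwa [Set.ncard_image_of_injective _ (Fin.castSucc_injective n)]
    · rintro x ⟨x', hx', rfl⟩ y ⟨y', hy', rfl⟩ hxy
      exact Or.inl ⟨x', y', rfl, rfl, h3 _ hx' _ hy'
        (by simpa [Fin.castSucc_inj] using hxy)⟩

lemma lastNbrs_prop {G : SimpleGraph (Fin (n+1))} (hn : 1 ≤ n) (hG : IsIncreasing12Tree G) :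
    (lastNbrs G).Nonempty ∧ (lastNbrs G).ncard ≤ 2 ∧
      ∀ x ∈ lastNbrs G, ∀ y ∈ lastNbrs G, x ≠ y → (res G).Adj x y := by
  obtain ⟨h1, h2, h3⟩ := hG (Fin.last n) (by simpa using hn)
  rw [lowerNbrs_last_eq] at h1 h2 h3
  refine ⟨?_, ?_, ?_⟩
  · exact (Set.image_nonempty (f := Fin.castSucc)).1 h1
  · rwa [Set.ncard_image_of_injective _ (Fin.castSucc_injective n)] at h2
  · intro x hx y hy hxy
    exact h3 _ (Set.mem_image_of_mem _ hx) _ (Set.mem_image_of_mem _ hy)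
      (by simpa [Fin.castSucc_inj] using hxy)

end Scratch

namespace Scratch
variable {n : ℕ}

lemma mem_pair_set (x y : Fin n) : {w | w ∈ s(x, y)} = ({x, y} : Set (Fin n)) := by
  ext w; simp [Sym2.mem_iff]

lemma edge_props {G : SimpleGraph (Fin n)} {e : Sym2 (Fin n)} (he : e ∈ G.edgeSet) :
    {w | w ∈ e}.Nonempty ∧ {w | w ∈ e}.ncard = 2 ∧
      ∀ x ∈ {w | w ∈ e}, ∀ y ∈ {w | w ∈ e}, x ≠ y → G.Adj x y := by
  induction e using Sym2.ind with
  | _ x y =>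
    rw [SimpleGraph.mem_edgeSet] at he
    rw [mem_pair_set]
    refine ⟨⟨x, by simp⟩, Set.ncard_pair he.ne, ?_⟩
    rintro a (rfl | rfl) b (rfl | rfl) hab
    · exact absurd rfl hab
    · exact he
    · exact he.symm
    · exact absurd rfl hab

/-- the decomposition map -/
noncomputable def decompMap (n m : ℕ) :
    ({p : SimpleGraph (Fin n) × Fin n // IsIncreasing12Tree p.1 ∧ p.1.edgeSet.ncard + 1 = m} ⊕
     {p : SimpleGraph (Fin n) × Sym2 (Fin n) //
        (IsIncreasing12Tree p.1 ∧ p.1.edgeSet.ncard + 2 = m) ∧ p.2 ∈ p.1.edgeSet}) →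
    {G : SimpleGraph (Fin (n+1)) // IsIncreasing12Tree G ∧ G.edgeSet.ncard = m}
  | Sum.inl ⟨(G, x), hG, hm⟩ =>
    ⟨extS G {x},
      inc_extS hG ⟨x, rfl⟩ (by simp) (by rintro a rfl b rfl hab; exact absurd rfl hab),
      by rw [ncard_edgeSet, res_extS, lastNbrs_extS, Set.ncard_singleton]; exact hm⟩
  | Sum.inr ⟨(G, e), ⟨hG, hm⟩, he⟩ =>
    ⟨extS G {w | w ∈ e},
      inc_extS hG (edge_props he).1 (le_of_eq (edge_props he).2.1) (edge_props he).2.2,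
      by rw [ncard_edgeSet, res_extS, lastNbrs_extS, (edge_props he).2.1]; exact hm⟩

lemma decompMap_bijective (m : ℕ) (hn : 1 ≤ n) : Function.Bijective (decompMap n m) := by
  constructor
  · rintro (⟨⟨G, x⟩, hG, hm⟩ | ⟨⟨G, e⟩, ⟨hG, hm⟩, he⟩) (⟨⟨H, y⟩, hH, hm'⟩ | ⟨⟨H, e'⟩, ⟨hH, hm'⟩, he'⟩) h <;>
      simp only [decompMap, Subtype.mk.injEq] at h <;>
      have hres := congrArg res h <;> rw [res_extS, res_extS] at hres <;>
      have hlast := congrArg lastNbrs h <;> rw [lastNbrs_extS, lastNbrs_extS] at hlast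
    · subst hres
      obtain rfl : x = y := Set.singleton_eq_singleton_iff.1 hlast
      rfl
    · exfalso
      have h1 : ({x} : Set (Fin n)).ncard = 1 := Set.ncard_singleton x
      rw [hlast, (edge_props he').2.1] at h1
      exact absurd h1 (by norm_num)
    · exfalso
      have h1 : ({y} : Set (Fin n)).ncard = 1 := Set.ncard_singleton y
      rw [← hlast, (edge_props he).2.1] at h1
      exact absurd h1 (by norm_num)
    · subst hres
      obtain rfl : e = e' := Sym2.ext fun z => by
        have := Set.ext_iff.1 hlast z
        simpa using this
      rfl
  · rintro ⟨G, hG, hm⟩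
    obtain ⟨h1, h2, h3⟩ := lastNbrs_prop hn hG
    have hE := ncard_edgeSet G
    have hpos : 1 ≤ (lastNbrs G).ncard := (Set.ncard_pos (Set.toFinite _)).2 h1
    interval_cases hD : (lastNbrs G).ncard
    · obtain ⟨x, hx⟩ := Set.ncard_eq_one.1 hD
      refine ⟨Sum.inl ⟨(res G, x), inc_res hG, hE.symm.trans hm⟩, ?_⟩
      simp only [decompMap]
      apply Subtype.ext
      show extS (res G) {x} = G
      rw [← hx]
      exact extS_res G
    · obtain ⟨x, y, hxy, hxyD⟩ := Set.ncard_eq_two.1 hD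
      have hmem : s(x, y) ∈ (res G).edgeSet := by
        rw [SimpleGraph.mem_edgeSet]
        exact h3 x (by rw [hxyD]; exact Set.mem_insert _ _)
          y (by rw [hxyD]; exact Set.mem_insert_of_mem _ rfl) hxy
      refine ⟨Sum.inr ⟨(res G, s(x, y)), ⟨inc_res hG, hE.symm.trans hm⟩, hmem⟩, ?_⟩
      simp only [decompMap]
      apply Subtype.ext
      show extS (res G) {w | w ∈ s(x, y)} = G
      rw [mem_pair_set, ← hxyD]
      exact extS_res G

end Scratch

namespace Scratch
variable {n : ℕ}

lemma nat_card_sigma {ι : Type*} [Fintype ι] (β : ι → Type*) [∀ i, Finite (β i)] :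
    Nat.card (Σ i, β i) = ∑ i : ι, Nat.card (β i) := by
  letI : ∀ i, Fintype (β i) := fun i => Fintype.ofFinite _
  simp [Nat.card_eq_fintype_card]

lemma decomp (hn : 1 ≤ n) (m : ℕ) :
    numInc12Trees (n+1) m
      = Nat.card {p : SimpleGraph (Fin n) × Fin n //
          IsIncreasing12Tree p.1 ∧ p.1.edgeSet.ncard + 1 = m}
        + Nat.card {p : SimpleGraph (Fin n) × Sym2 (Fin n) //
            (IsIncreasing12Tree p.1 ∧ p.1.edgeSet.ncard + 2 = m) ∧ p.2 ∈ p.1.edgeSet} := by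
  rw [numInc12Trees, ← Nat.card_eq_of_bijective _ (decompMap_bijective m hn), Nat.card_sum]

lemma cardA_eq (k : ℕ) :
    Nat.card {p : SimpleGraph (Fin n) × Fin n //
        IsIncreasing12Tree p.1 ∧ p.1.edgeSet.ncard + 1 = k + 1}
      = numInc12Trees n k * n := by
  rw [Nat.card_congr (Equiv.subtypeEquivRight (q := fun p : SimpleGraph (Fin n) × Fin n =>
        IsIncreasing12Tree p.1 ∧ p.1.edgeSet.ncard = k) (by intro p; rw [Nat.add_left_inj]))]
  rw [Nat.card_congr (Equiv.prodSubtypeFstEquivSubtypeProd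
    (p := fun G : SimpleGraph (Fin n) => IsIncreasing12Tree G ∧ G.edgeSet.ncard = k))]
  rw [Nat.card_prod, show Nat.card (Fin n) = n from by simp [Nat.card_eq_fintype_card],
    numInc12Trees]

lemma cardA_zero :
    Nat.card {p : SimpleGraph (Fin n) × Fin n //
        IsIncreasing12Tree p.1 ∧ p.1.edgeSet.ncard + 1 = 0} = 0 := by
  rw [Nat.card_eq_zero]
  left
  constructor
  rintro ⟨p, -, h⟩
  simp at h

lemma cardB_eq (k : ℕ) :
    Nat.card {p : SimpleGraph (Fin n) × Sym2 (Fin n) //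
        (IsIncreasing12Tree p.1 ∧ p.1.edgeSet.ncard + 2 = k + 2) ∧ p.2 ∈ p.1.edgeSet}
      = numInc12Trees n k * k := by
  classical
  rw [Nat.card_congr (Equiv.subtypeProdEquivSigmaSubtype (fun (G : SimpleGraph (Fin n))
        (e : Sym2 (Fin n)) => (IsIncreasing12Tree G ∧ G.edgeSet.ncard + 2 = k + 2) ∧ e ∈ G.edgeSet))]
  rw [nat_card_sigma]
  have hterm : ∀ G : SimpleGraph (Fin n),
      Nat.card {e : Sym2 (Fin n) //
          (IsIncreasing12Tree G ∧ G.edgeSet.ncard + 2 = k + 2) ∧ e ∈ G.edgeSet}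
        = if IsIncreasing12Tree G ∧ G.edgeSet.ncard = k then k else 0 := by
    intro G
    by_cases hG : IsIncreasing12Tree G ∧ G.edgeSet.ncard = k
    · rw [if_pos hG]
      rw [Nat.card_congr (Equiv.subtypeEquivRight (q := fun e => e ∈ G.edgeSet)
        (by intro e; simp [hG.1, hG.2]))]
      rw [← hG.2, ← Nat.card_coe_set_eq]
    · rw [if_neg hG, Nat.card_eq_zero]
      left
      constructor
      rintro ⟨e, ⟨h1, h2⟩, -⟩
      exact hG ⟨h1, by omega⟩
  rw [Finset.sum_congr rfl (fun G _ => hterm G)]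
  rw [← Finset.sum_filter, Finset.sum_const, smul_eq_mul]
  congr 1
  rw [numInc12Trees, Nat.card_eq_fintype_card, Fintype.card_subtype]

lemma cardB_zero (m : ℕ) (hm : m < 2) :
    Nat.card {p : SimpleGraph (Fin n) × Sym2 (Fin n) //
        (IsIncreasing12Tree p.1 ∧ p.1.edgeSet.ncard + 2 = m) ∧ p.2 ∈ p.1.edgeSet} = 0 := by
  rw [Nat.card_eq_zero]
  left
  constructor
  rintro ⟨p, ⟨-, h⟩, -⟩
  omega

lemma key0 (hn : 1 ≤ n) : numInc12Trees (n+1) 0 = 0 := by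
  rw [decomp hn, cardA_zero, cardB_zero 0 (by norm_num)]

lemma key1 (hn : 1 ≤ n) : numInc12Trees (n+1) 1 = numInc12Trees n 0 * n := by
  rw [decomp hn, cardA_eq 0, cardB_zero 1 (by norm_num), Nat.add_zero]

lemma keySucc (hn : 1 ≤ n) (k : ℕ) :
    numInc12Trees (n+1) (k+2) = numInc12Trees n (k+1) * n + numInc12Trees n k * k := by
  rw [decomp hn, cardA_eq (k+1), cardB_eq k]

end Scratch

namespace Scratch

lemma base1 (m : ℕ) : numInc12Trees 1 m = if m = 0 then 1 else 0 := by
  have hbot : ∀ G : SimpleGraph (Fin 1), G = ⊥ := by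
    intro G
    ext a b
    simp only [SimpleGraph.bot_adj, iff_false]
    intro h
    exact h.ne (Subsingleton.elim a b)
  have hinc : IsIncreasing12Tree (⊥ : SimpleGraph (Fin 1)) := by
    intro v hv
    exact absurd hv (by omega)
  rw [numInc12Trees]
  split_ifs with hm
  · subst hm
    rw [Nat.card_eq_one_iff_exists]
    refine ⟨⟨⊥, hinc, by simp⟩, ?_⟩
    rintro ⟨G, hG⟩
    exact Subtype.ext (hbot G)
  · rw [Nat.card_eq_zero]
    left
    constructor
    rintro ⟨G, -, hG⟩
    rw [hbot G] at hG
    simp at hG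
    omega

end Scratch

theorem egf_increasing12Trees_pde (C : PowerSeries (PowerSeries ℚ))
    (hC0 : PowerSeries.coeff (R := PowerSeries ℚ) 0 C = 0)
    (hC : ∀ n : ℕ, 1 ≤ n → PowerSeries.coeff (R := PowerSeries ℚ) n C =
      PowerSeries.mk fun m => (numInc12Trees n m : ℚ) / (n.factorial : ℚ)) :
    derivSeries C =
      1 + (PowerSeries.X * PowerSeries.C (R := PowerSeries ℚ) PowerSeries.X) * derivSeries C
        + (PowerSeries.C (R := PowerSeries ℚ) PowerSeries.X) ^ 3 * derivU C := by
  have hds : ∀ (g : PowerSeries (PowerSeries ℚ)) (k : ℕ),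
      PowerSeries.coeff k (derivSeries g)
        = ((k + 1 : ℕ) : PowerSeries ℚ) * PowerSeries.coeff (k+1) g :=
    fun g k => PowerSeries.coeff_mk _ _
  have hds' : ∀ (g : PowerSeries ℚ) (k : ℕ),
      PowerSeries.coeff k (derivSeries g) = ((k + 1 : ℕ) : ℚ) * PowerSeries.coeff (k+1) g :=
    fun g k => PowerSeries.coeff_mk _ _
  have hdu : ∀ k : ℕ,
      PowerSeries.coeff k (derivU C) = derivSeries (PowerSeries.coeff k C) :=
    fun k => PowerSeries.coeff_mk _ _
  have hcm : ∀ (a : ℕ) (f : PowerSeries ℚ) (m : ℕ),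
      PowerSeries.coeff (R := ℚ) m ((a : PowerSeries ℚ) * f) = a * PowerSeries.coeff (R := ℚ) m f := by
    intro a f m
    rw [← map_natCast (PowerSeries.C (R := ℚ)) a, PowerSeries.coeff_C_mul]
  apply PowerSeries.ext
  intro nn
  rw [map_add, map_add, hds]
  cases nn with
  | zero =>
    rw [hC 1 le_rfl, PowerSeries.coeff_one, if_pos rfl]
    have h2 : PowerSeries.coeff (R := PowerSeries ℚ) 0
        ((PowerSeries.X * PowerSeries.C PowerSeries.X) * derivSeries C) = 0 := by
      rw [mul_assoc]
      exact PowerSeries.coeff_zero_X_mul _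
    have h3 : PowerSeries.coeff (R := PowerSeries ℚ) 0
        ((PowerSeries.C PowerSeries.X) ^ 3 * derivU C)
          = PowerSeries.X ^ 3 * derivSeries (PowerSeries.coeff 0 C) := by
      rw [← map_pow, PowerSeries.coeff_C_mul, hdu]
    have hz : derivSeries (0 : PowerSeries ℚ) = 0 := by
      apply PowerSeries.ext; intro m
      simp [derivSeries, PowerSeries.coeff_mk]
    rw [h2, h3, hC0, hz, mul_zero, add_zero, add_zero]
    apply PowerSeries.ext
    intro m
    rw [hcm, PowerSeries.coeff_mk, PowerSeries.coeff_one, Scratch.base1]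
    split_ifs <;> simp [Nat.factorial]
  | succ k =>
    rw [PowerSeries.coeff_one, if_neg (Nat.succ_ne_zero k)]
    rw [mul_assoc, PowerSeries.coeff_succ_X_mul, PowerSeries.coeff_C_mul, hds,
      ← map_pow, PowerSeries.coeff_C_mul, hdu, hC (k+1) (by omega), hC (k+2) (by omega)]
    apply PowerSeries.ext
    intro m
    rw [map_add, map_add]
    rw [hcm, PowerSeries.coeff_mk, map_zero]
    have hfac2 : ((k+2).factorial : ℚ) = (k+2) * ((k+1).factorial : ℚ) := by
      rw [show k+2 = (k+1)+1 from rfl, Nat.factorial_succ]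
      push_cast
      ring
    have hfacpos : ((k+1).factorial : ℚ) ≠ 0 := by
      exact_mod_cast (Nat.factorial_pos (k+1)).ne'
    match m with
    | 0 =>
      rw [PowerSeries.coeff_zero_X_mul, PowerSeries.coeff_X_pow_mul' _ 3 0, if_neg (by omega)]
      rw [Scratch.key0 (by omega)]
      simp
    | 1 =>
      rw [PowerSeries.coeff_succ_X_mul, hcm,
        PowerSeries.coeff_mk, PowerSeries.coeff_X_pow_mul' _ 3 1, if_neg (by omega)]
      rw [Scratch.key1 (by omega)]
      push_cast [hfac2]
      field_simp
      ring
    | 2 =>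
      rw [PowerSeries.coeff_succ_X_mul, hcm,
        PowerSeries.coeff_mk, PowerSeries.coeff_X_pow_mul' _ 3 2, if_neg (by omega)]
      rw [Scratch.keySucc (by omega) 0]
      push_cast [hfac2]
      field_simp
      ring
    | (j+3) =>
      rw [PowerSeries.coeff_succ_X_mul, hcm,
        PowerSeries.coeff_mk, PowerSeries.coeff_X_pow_mul _ 3 j, hds', PowerSeries.coeff_mk]
      rw [Scratch.keySucc (by omega) (j+1)]
      push_cast [hfac2]
      field_simp
      ring
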